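/- Let n ≥ 3 and let R : Fin n → Fin n → Fin n → ℝ be a family of reals R^l_{jk} antisymmetric in the lower indices (R^l_{jk} = -R^l_{kj}). If for every symmetric matrix b : Fin n → Fin n → ℝ one has ∑_m (b_{im} R^m_{jk} + b_{km} R^m_{ij} + b_{jm} R^m_{ki}) = 0 for all i,j,k, then there exists ξ : Fin n → ℝ such that R^l_{jk} = ξ_j δ^l_k − ξ_k δ^l_j for all l,j,k. -/
import Mathlib

theorem stmt_0 (n : ℕ) (hn : 3 ≤ n) (R : Fin n → Fin n → Fin n → ℝ)
    (hanti : ∀ l j k, R l j k = - R l k j)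
    (hb : ∀ b : Fin n → Fin n → ℝ, (∀ i m, b i m = b m i) →
      ∀ i j k, ∑ m, (b i m * R m j k + b k m * R m i j + b j m * R m k i) = 0) :
    ∃ ξ : Fin n → ℝ, ∀ l j k,
      R l j k = ξ j * (if l = k then 1 else 0) - ξ k * (if l = j then 1 else 0) := by
  have hdiag : ∀ l j, R l j j = 0 := by
    intro l j; have := hanti l j j; linarith
  -- R q j k = 0 when q ∉ {j,k}
  have h0 : ∀ q j k : Fin n, j ≠ q → k ≠ q → R q j k = 0 := by
    intro q j k hj hk
    have h := hb (fun a m => (if a = q then (1:ℝ) else 0) * (if m = q then 1 else 0))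
      (by intro a m; ring) q j k
    simp only [if_neg hj, if_neg hk, if_pos rfl, one_mul, zero_mul, mul_zero, add_zero,
      ite_mul, zero_mul] at h
    simpa using h
  -- R k j k = R i j i for i ≠ j, k ≠ j, i ≠ k
  have h2 : ∀ i j k : Fin n, i ≠ j → k ≠ j → i ≠ k → R k j k = R i j i := by
    intro i j k hij hkj hik
    have h := hb (fun a m => (if a = i then (1:ℝ) else 0) * (if m = k then 1 else 0)
        + (if a = k then (1:ℝ) else 0) * (if m = i then 1 else 0))
      (by intro a m; ring) i j k
    have hji : j ≠ i := fun e => hij e.symm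
    have hjk : j ≠ k := fun e => hkj e.symm
    have hki : k ≠ i := fun e => hik e.symm
    simp only [if_pos rfl, if_neg hik, if_neg hki, if_neg hji, if_neg hjk, one_mul,
      zero_mul, mul_zero, add_zero, zero_add, ite_mul] at h
    simp only [Finset.sum_add_distrib, Finset.sum_ite_eq', Finset.mem_univ, if_pos] at h
    nlinarith [h, hanti i i j]
  have h1 : (1:ℕ) < n := by omega
  have h0n : (0:ℕ) < n := by omega
  set z : Fin n := ⟨0, h0n⟩ with hz
  set o : Fin n := ⟨1, h1⟩ with ho
  have hzo : z ≠ o := by simp [hz, ho, Fin.ext_iff]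
  classical
  refine ⟨fun j => R (if j = z then o else z) j (if j = z then o else z), ?_⟩
  have hother : ∀ j : Fin n, (if j = z then o else z) ≠ j := by
    intro j
    by_cases hj : j = z
    · simp only [if_pos hj]; rw [hj]; exact fun e => hzo e.symm
    · simp only [if_neg hj]; exact fun e => hj e.symm
  intro l j k
  rcases eq_or_ne j k with rfl | hjk
  · rw [hdiag]; ring
  · rcases eq_or_ne l k with rfl | hlk
    · -- l = k, j ≠ l
      have hlj : l ≠ j := fun e => hjk (e.symm ▸ rfl)
      simp only [if_pos rfl, if_neg hlj, if_true, mul_one, mul_zero, sub_zero]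
      set i := (if j = z then o else z) with hi
      have hij : i ≠ j := hother j
      by_cases hil : i = l
      · rw [hil]
      · have := h2 i j l hij (fun e => hjk e.symm) hil
        exact this
    · rcases eq_or_ne l j with rfl | hlj
      · -- l = j, l ≠ k
        simp only [if_neg hlk, if_pos rfl, if_true, mul_zero, mul_one, zero_sub]
        set i := (if k = z then o else z) with hi
        have hik : i ≠ k := hother k
        have key : R l k l = R i k i := by
          by_cases hil : i = l
          · rw [hil]
          · exact h2 i k l hik hlk hil
        rw [hanti l l k, key]
      · simp only [if_neg hlk, if_neg hlj, mul_zero, sub_zero]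
        exact h0 l j k (fun e => hlj e.symm) (fun e => hlk e.symm)
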